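/- Let four lines in the plane be pairwise non-parallel and such that no three are concurrent. Then the orthocenters of the four triangles formed by taking the lines three at a time are collinear (they lie on the Steiner line of the complete quadrilateral). -/
import Mathlib

/-- Perpendicularity of plane vectors via the real inner product on `ℂ`. -/
def Perp (u v : ℂ) : Prop := (u * (starRingEnd ℂ) v).re = 0

/-- `H` is the orthocentre of the (nondegenerate) triangle `XYZ`. -/
def IsOrthocenter (H X Y Z : ℂ) : Prop :=
  Perp (H - X) (Y - Z) ∧ Perp (H - Y) (X - Z)

namespace SteinerAux

/-- real dot product -/
def dotR (u v : ℂ) : ℝ := u.re * v.re + u.im * v.im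

/-- real cross product -/
def crR (u v : ℂ) : ℝ := u.re * v.im - u.im * v.re

lemma perp_iff {u v : ℂ} : Perp u v ↔ dotR u v = 0 := by
  unfold Perp dotR
  rw [Complex.mul_re, Complex.conj_re, Complex.conj_im]
  constructor <;> intro h <;> linear_combination h

lemma collinear_degen {A B C : ℂ} (h : A = B ∨ A = C ∨ B = C) :
    Collinear ℝ ({A, B, C} : Set ℂ) := by
  rcases h with rfl | rfl | rfl
  · have : ({A, A, C} : Set ℂ) = {A, C} := by ext x; simp
    rw [this]; exact collinear_pair ℝ A C
  · have : ({A, B, A} : Set ℂ) = {A, B} := by ext x; simp; tauto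
    rw [this]; exact collinear_pair ℝ A B
  · have : ({A, B, B} : Set ℂ) = {A, B} := by ext x; simp
    rw [this]; exact collinear_pair ℝ A B

lemma nc_ne {A B C : ℂ} (h : ¬ Collinear ℝ ({A, B, C} : Set ℂ)) :
    A ≠ B ∧ A ≠ C ∧ B ≠ C :=
  ⟨fun e => h (collinear_degen (Or.inl e)),
   fun e => h (collinear_degen (Or.inr (Or.inl e))),
   fun e => h (collinear_degen (Or.inr (Or.inr e)))⟩

lemma cr_of_collinear {A B C : ℂ} (h : Collinear ℝ ({A, B, C} : Set ℂ)) :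
    crR (B - A) (C - A) = 0 := by
  rw [collinear_iff_of_mem (Set.mem_insert A _)] at h
  obtain ⟨v, hv⟩ := h
  obtain ⟨rB, hB⟩ := hv B (by simp)
  obtain ⟨rC, hC⟩ := hv C (by simp)
  rw [hB, hC]
  unfold crR
  simp only [vadd_eq_add, Complex.add_re, Complex.add_im, Complex.sub_re, Complex.sub_im,
    Complex.real_smul, Complex.mul_re, Complex.mul_im, Complex.ofReal_re, Complex.ofReal_im]
  ring

lemma collinear_of_cr {A B C : ℂ} (h : crR (B - A) (C - A) = 0) :
    Collinear ℝ ({A, B, C} : Set ℂ) := by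
  rcases eq_or_ne B A with hBA | hBA
  · exact collinear_degen (Or.inl hBA.symm)
  · rw [collinear_iff_of_mem (Set.mem_insert A _)]
    refine ⟨B - A, fun p hp => ?_⟩
    have hBA' : B - A ≠ 0 := sub_ne_zero.2 hBA
    simp only [Set.mem_insert_iff, Set.mem_singleton_iff] at hp
    rcases hp with rfl | rfl | rfl
    · exact ⟨0, by simp⟩
    · refine ⟨1, ?_⟩
      simp [vadd_eq_add, Complex.real_smul]
    · refine ⟨((p - A) / (B - A)).re, ?_⟩
      have hnum : (p - A).im * (B - A).re - (p - A).re * (B - A).im = 0 := by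
        unfold crR at h; linear_combination h
      have him : ((p - A) / (B - A)).im = 0 := by
        rw [Complex.div_im, ← sub_div, hnum, zero_div]
      have hre : ((((p - A) / (B - A)).re : ℝ) : ℂ) = (p - A) / (B - A) :=
        Complex.ext (by simp) (by simp [him])
      show p = _ • (B - A) +ᵥ A
      rw [vadd_eq_add, Complex.real_smul, hre, div_mul_cancel₀ _ hBA']
      ring

lemma transfer {u v w : ℂ} (hv : v ≠ 0) (h1 : dotR u v = 0) (h2 : crR v w = 0) :
    dotR u w = 0 := by
  have hv' : v.re ≠ 0 ∨ v.im ≠ 0 := by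
    by_contra hcon
    push_neg at hcon
    exact hv (Complex.ext hcon.1 hcon.2)
  rcases hv' with h | h
  · have key : v.re * dotR u w = 0 := by
      unfold dotR crR at *
      linear_combination w.re * h1 + u.im * h2
    exact (mul_eq_zero.1 key).resolve_left h
  · have key : v.im * dotR u w = 0 := by
      unfold dotR crR at *
      linear_combination w.im * h1 - u.re * h2
    exact (mul_eq_zero.1 key).resolve_left h

lemma third_alt {H X Y Z : ℂ} (h1 : dotR (H - X) (Y - Z) = 0)
    (h2 : dotR (H - Y) (X - Z) = 0) : dotR (H - Z) (Y - X) = 0 := by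
  unfold dotR at *
  simp only [Complex.sub_re, Complex.sub_im] at *
  linear_combination h1 - h2

lemma dotR_signs {u v w : ℂ} (hvw : v = -w) (h : dotR u w = 0) : dotR u v = 0 := by
  subst hvw
  unfold dotR at *
  simp only [Complex.neg_re, Complex.neg_im]
  linear_combination -h

lemma cr_swap {a b c : ℂ} (h : crR (b - a) (c - a) = 0) : crR (c - a) (b - a) = 0 := by
  unfold crR at *
  linear_combination -h

lemma cr_cycle {a b c : ℂ} (h : crR (b - a) (c - a) = 0) : crR (c - b) (a - b) = 0 := by
  unfold crR at *
  simp only [Complex.sub_re, Complex.sub_im] at *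
  linear_combination h

lemma ortho_power {H X Y Z D E : ℂ} (hYZ : Y ≠ Z) (hXZ : X ≠ Z)
    (a1 : dotR (H - X) (Y - Z) = 0) (a2 : dotR (H - Y) (X - Z) = 0)
    (hD : crR (Z - Y) (D - Y) = 0) (hE : crR (Z - X) (E - X) = 0) :
    dotR (H - X) (H - D) = dotR (H - Y) (H - E) := by
  have hD' : crR (Y - Z) (Z - D) = 0 := by
    unfold crR at hD ⊢
    simp only [Complex.sub_re, Complex.sub_im] at hD ⊢
    linear_combination hD
  have hE' : crR (X - Z) (Z - E) = 0 := by
    unfold crR at hE ⊢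
    simp only [Complex.sub_re, Complex.sub_im] at hE ⊢
    linear_combination hE
  have t1 : dotR (H - X) (Z - D) = 0 := transfer (sub_ne_zero.2 hYZ) a1 hD'
  have t2 : dotR (H - Y) (Z - E) = 0 := transfer (sub_ne_zero.2 hXZ) a2 hE'
  have t3 : dotR (H - Z) (Y - X) = 0 := third_alt a1 a2
  unfold dotR at t1 t2 t3 ⊢
  simp only [Complex.sub_re, Complex.sub_im] at t1 t2 t3 ⊢
  linear_combination t1 - t2 + t3

lemma collinear_of_dot {c : ℂ} (hc : c ≠ 0) (A B C D : ℂ)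
    (hB : dotR (B - A) c = 0) (hC : dotR (C - A) c = 0) (hD : dotR (D - A) c = 0) :
    Collinear ℝ ({A, B, C, D} : Set ℂ) := by
  have hIc : Complex.I * c ≠ 0 := mul_ne_zero Complex.I_ne_zero hc
  have key : ∀ q : ℂ, dotR (q - A) c = 0 → ∃ r : ℝ, q = r • (Complex.I * c) +ᵥ A := by
    intro q hq
    refine ⟨((q - A) / (Complex.I * c)).re, ?_⟩
    have hnum : (q - A).im * (Complex.I * c).re - (q - A).re * (Complex.I * c).im = 0 := by
      unfold dotR at hq
      simp only [Complex.mul_re, Complex.mul_im, Complex.I_re, Complex.I_im]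
      linear_combination -hq
    have him : ((q - A) / (Complex.I * c)).im = 0 := by
      rw [Complex.div_im, ← sub_div, hnum, zero_div]
    have hre : ((((q - A) / (Complex.I * c)).re : ℝ) : ℂ) = (q - A) / (Complex.I * c) :=
      Complex.ext (by simp) (by simp [him])
    rw [vadd_eq_add, Complex.real_smul, hre, div_mul_cancel₀ _ hIc]
    ring
  rw [collinear_iff_of_mem (Set.mem_insert A _)]
  refine ⟨Complex.I * c, fun p hp => ?_⟩
  simp only [Set.mem_insert_iff, Set.mem_singleton_iff] at hp
  rcases hp with rfl | rfl | rfl | rfl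
  · exact key p (by unfold dotR; simp)
  · exact key _ hB
  · exact key _ hC
  · exact key _ hD

end SteinerAux

open SteinerAux in
/-- Steiner's theorem on the complete quadrilateral: four lines in general position
(pairwise non-parallel, no three concurrent) determine four triangles, and the four
orthocentres of these triangles are collinear.  Line `i` is recorded by the three
intersection points `P i j` it makes with the other lines. -/
theorem stmt_4 (P12 P13 P14 P23 P24 P34 : ℂ)
    (hl1 : Collinear ℝ ({P12, P13, P14} : Set ℂ))
    (hl2 : Collinear ℝ ({P12, P23, P24} : Set ℂ))
    (hl3 : Collinear ℝ ({P13, P23, P34} : Set ℂ))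
    (hl4 : Collinear ℝ ({P14, P24, P34} : Set ℂ))
    (ht1 : ¬ Collinear ℝ ({P23, P24, P34} : Set ℂ))
    (ht2 : ¬ Collinear ℝ ({P13, P14, P34} : Set ℂ))
    (ht3 : ¬ Collinear ℝ ({P12, P14, P24} : Set ℂ))
    (ht4 : ¬ Collinear ℝ ({P12, P13, P23} : Set ℂ))
    (H1 H2 H3 H4 : ℂ)
    (hH1 : IsOrthocenter H1 P23 P24 P34)
    (hH2 : IsOrthocenter H2 P13 P14 P34)
    (hH3 : IsOrthocenter H3 P12 P14 P24)
    (hH4 : IsOrthocenter H4 P12 P13 P23) :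
    Collinear ℝ ({H1, H2, H3, H4} : Set ℂ) := by
  -- pairwise distinct triangle vertices
  obtain ⟨n1a, n1b, n1c⟩ := nc_ne ht1   -- P23 ≠ P24, P23 ≠ P34, P24 ≠ P34
  obtain ⟨n2a, n2b, n2c⟩ := nc_ne ht2   -- P13 ≠ P14, P13 ≠ P34, P14 ≠ P34
  obtain ⟨n3a, n3b, n3c⟩ := nc_ne ht3   -- P12 ≠ P14, P12 ≠ P24, P14 ≠ P24
  obtain ⟨n4a, n4b, n4c⟩ := nc_ne ht4   -- P12 ≠ P13, P12 ≠ P23, P13 ≠ P23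
  -- cross equations of the four lines
  have c1 := cr_of_collinear hl1   -- crR (P13-P12) (P14-P12) = 0
  have c2 := cr_of_collinear hl2   -- crR (P23-P12) (P24-P12) = 0
  have c3 := cr_of_collinear hl3   -- crR (P23-P13) (P34-P13) = 0
  have c4 := cr_of_collinear hl4   -- crR (P24-P14) (P34-P14) = 0
  -- altitude equations
  have b11 : dotR (H1 - P23) (P24 - P34) = 0 := perp_iff.1 hH1.1
  have b12 : dotR (H1 - P24) (P23 - P34) = 0 := perp_iff.1 hH1.2
  have b21 : dotR (H2 - P13) (P14 - P34) = 0 := perp_iff.1 hH2.1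
  have b22 : dotR (H2 - P14) (P13 - P34) = 0 := perp_iff.1 hH2.2
  have b31 : dotR (H3 - P12) (P14 - P24) = 0 := perp_iff.1 hH3.1
  have b32 : dotR (H3 - P14) (P12 - P24) = 0 := perp_iff.1 hH3.2
  have b41 : dotR (H4 - P12) (P13 - P23) = 0 := perp_iff.1 hH4.1
  have b42 : dotR (H4 - P13) (P12 - P23) = 0 := perp_iff.1 hH4.2
  -- equal powers: triangle 1 (vertices P23 P24 P34)
  have pw1a : dotR (H1 - P23) (H1 - P14) = dotR (H1 - P24) (H1 - P13) :=
    ortho_power n1c n1b b11 b12 (cr_cycle c4) (cr_cycle c3)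
  have pw1b : dotR (H1 - P24) (H1 - P13) = dotR (H1 - P34) (H1 - P12) :=
    ortho_power n1b.symm n1a.symm (dotR_signs (by ring) b12) (third_alt b11 b12)
      (cr_swap (cr_cycle (cr_cycle c3))) (cr_swap (cr_cycle (cr_cycle c2)))
  -- triangle 2 (vertices P13 P14 P34)
  have pw2a : dotR (H2 - P13) (H2 - P24) = dotR (H2 - P14) (H2 - P23) :=
    ortho_power n2c n2b b21 b22 (cr_swap c4) (cr_swap c3)
  have pw2b : dotR (H2 - P14) (H2 - P23) = dotR (H2 - P34) (H2 - P12) :=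
    ortho_power n2b.symm n2a.symm (dotR_signs (by ring) b22) (third_alt b21 b22)
      (cr_cycle (cr_cycle c3)) (cr_swap (cr_cycle (cr_cycle c1)))
  -- triangle 3 (vertices P12 P14 P24)
  have pw3a : dotR (H3 - P12) (H3 - P34) = dotR (H3 - P14) (H3 - P23) :=
    ortho_power n3c n3b b31 b32 c4 (cr_swap c2)
  have pw3b : dotR (H3 - P24) (H3 - P13) = dotR (H3 - P14) (H3 - P23) :=
    ortho_power n3a.symm n3b.symm (third_alt b31 b32) (dotR_signs (by ring) b32)
      (cr_cycle (cr_cycle c1)) (cr_cycle (cr_cycle c2))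
  -- triangle 4 (vertices P12 P13 P23)
  have pw4a : dotR (H4 - P12) (H4 - P34) = dotR (H4 - P13) (H4 - P24) :=
    ortho_power n4c n4b b41 b42 c3 c2
  have pw4b : dotR (H4 - P23) (H4 - P14) = dotR (H4 - P13) (H4 - P24) :=
    ortho_power n4a.symm n4b.symm (third_alt b41 b42) (dotR_signs (by ring) b42)
      (cr_swap (cr_cycle c1)) (cr_swap (cr_cycle c2))
  -- turn everything into polynomial equations
  unfold dotR at pw1a pw1b pw2a pw2b pw3a pw3b pw4a pw4b
  simp only [Complex.sub_re, Complex.sub_im] at pw1a pw1b pw2a pw2b pw3a pw3b pw4a pw4b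
  by_cases hc : P13 + P24 - (P12 + P34) = 0
  · -- degenerate radical axis for the first pair of circles; use the third circle
    have hc' : P14 + P23 - (P12 + P34) ≠ 0 := by
      intro hc2
      apply ht2
      apply collinear_of_cr
      have h24 : P24 = P12 + P34 - P13 := by linear_combination hc
      have h23 : P23 = P12 + P34 - P14 := by linear_combination hc2
      have c2' := c2
      rw [h23, h24] at c2'
      unfold crR at c2' ⊢
      simp only [Complex.sub_re, Complex.sub_im, Complex.add_re, Complex.add_im] at c2' ⊢
      linear_combination -c2'
    have dd2 : dotR (H2 - H1) (P14 + P23 - (P12 + P34)) = 0 := by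
      unfold dotR
      simp only [Complex.sub_re, Complex.sub_im, Complex.add_re, Complex.add_im]
      linear_combination -pw2b + pw1a + pw1b
    have dd3 : dotR (H3 - H1) (P14 + P23 - (P12 + P34)) = 0 := by
      unfold dotR
      simp only [Complex.sub_re, Complex.sub_im, Complex.add_re, Complex.add_im]
      linear_combination pw3a + pw1a + pw1b
    have dd4 : dotR (H4 - H1) (P14 + P23 - (P12 + P34)) = 0 := by
      unfold dotR
      simp only [Complex.sub_re, Complex.sub_im, Complex.add_re, Complex.add_im]
      linear_combination pw4a - pw4b + pw1a + pw1b
    exact collinear_of_dot hc' H1 H2 H3 H4 dd2 dd3 dd4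
  · have dd2 : dotR (H2 - H1) (P13 + P24 - (P12 + P34)) = 0 := by
      unfold dotR
      simp only [Complex.sub_re, Complex.sub_im, Complex.add_re, Complex.add_im]
      linear_combination pw1b - pw2a - pw2b
    have dd3 : dotR (H3 - H1) (P13 + P24 - (P12 + P34)) = 0 := by
      unfold dotR
      simp only [Complex.sub_re, Complex.sub_im, Complex.add_re, Complex.add_im]
      linear_combination pw3a - pw3b + pw1b
    have dd4 : dotR (H4 - H1) (P13 + P24 - (P12 + P34)) = 0 := by
      unfold dotR
      simp only [Complex.sub_re, Complex.sub_im, Complex.add_re, Complex.add_im]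
      linear_combination pw4a + pw1b
    exact collinear_of_dot hc H1 H2 H3 H4 dd2 dd3 dd4
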